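/- Let ρ be a congruence on the monoid M presented by ⟨x, y, e | e³ = e, xey = y, xe²y = x, xy = 1⟩. If the image of y is right-invertible in the quotient M/ρ, i.e. if there exists w ∈ M with (y·w) ρ 1, then ρ is the universal congruence M × M. -/

import Mathlib

/-- The alphabet `A = {x, y, e}`. -/
inductive Alpha : Type
  | x | y | e
  deriving DecidableEq

/-- The defining relations `e³ = e`, `xey = y`, `xe²y = x`, `xy = 1`. -/
def rel : FreeMonoid Alpha → FreeMonoid Alpha → Prop := fun a b =>
  (a = .of .e * .of .e * .of .e ∧ b = .of .e) ∨
  (a = .of .x * .of .e * .of .y ∧ b = .of .y) ∨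
  (a = .of .x * .of .e * .of .e * .of .y ∧ b = .of .x) ∨
  (a = .of .x * .of .y ∧ b = 1)

/-- The monoid `M = ⟨x, y, e | e³ = e, xey = y, xe²y = x, xy = 1⟩`. -/
abbrev M := PresentedMonoid rel

/-- The image of `x` in `M`. -/
def X : M := PresentedMonoid.of rel .x
/-- The image of `y` in `M`. -/
def Y : M := PresentedMonoid.of rel .y
/-- The image of `e` in `M`. -/
def E : M := PresentedMonoid.of rel .e

lemma sound {a b : FreeMonoid Alpha} (h : rel a b) :
    PresentedMonoid.mk rel a = PresentedMonoid.mk rel b :=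
  Quotient.sound (ConGen.Rel.of a b h)

lemma rel1 : E * E * E = E := by
  have := sound (a := .of .e * .of .e * .of .e) (b := .of .e) (Or.inl ⟨rfl, rfl⟩)
  simpa [E, PresentedMonoid.of] using this

lemma rel2 : X * E * Y = Y := by
  have := sound (a := .of .x * .of .e * .of .y) (b := .of .y)
    (Or.inr (Or.inl ⟨rfl, rfl⟩))
  simpa [X, Y, E, PresentedMonoid.of] using this

lemma rel3 : X * E * E * Y = X := by
  have := sound (a := .of .x * .of .e * .of .e * .of .y) (b := .of .x)
    (Or.inr (Or.inr (Or.inl ⟨rfl, rfl⟩)))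
  simpa [X, Y, E, PresentedMonoid.of] using this

lemma rel4 : X * Y = 1 := by
  have := sound (a := .of .x * .of .y) (b := 1)
    (Or.inr (Or.inr (Or.inr ⟨rfl, rfl⟩)))
  simpa [X, Y, PresentedMonoid.of] using this

/-- If the image of `y` is right-invertible in `M/ρ`, then `ρ` is universal. -/
theorem stmt_16 : ∀ ρ : Con M, (∃ w : M, ρ (Y * w) 1) → ρ = ⊤ := by
  intro ρ ⟨w, hw⟩
  -- w ρ X
  have hwX : ρ w X := by
    have := ρ.mul (ρ.refl X) hw
    rw [← mul_assoc, rel4, one_mul, mul_one] at this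
    exact this
  -- Y*X ρ 1
  have hyx : ρ (Y * X) 1 := ρ.trans (ρ.symm (ρ.mul (ρ.refl Y) hwX)) hw
  -- E ρ Y*Y*X
  have heE : ρ E (Y * Y * X) := by
    have h1 : ρ ((Y * X) * E * (Y * X)) (1 * E * 1) :=
      ρ.mul (ρ.mul hyx (ρ.refl E)) hyx
    have h2 : (Y * X) * E * (Y * X) = Y * Y * X := by
      have : (Y * X) * E * (Y * X) = Y * (X * E * Y) * X := by
        simp [mul_assoc]
      rw [this, rel2]
    rw [h2, one_mul, mul_one] at h1
    exact ρ.symm h1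
  -- E ρ Y
  have heY : ρ E Y := by
    refine ρ.trans heE ?_
    have : ρ (Y * (Y * X)) (Y * 1) := ρ.mul (ρ.refl Y) hyx
    rw [← mul_assoc, mul_one] at this
    exact this
  -- E*E ρ X
  have heeX : ρ (E * E) X := by
    have h1 : ρ ((Y * X) * (E * E) * (Y * X)) (1 * (E * E) * 1) :=
      ρ.mul (ρ.mul hyx (ρ.refl _)) hyx
    have h2 : (Y * X) * (E * E) * (Y * X) = Y * X * X := by
      have : (Y * X) * (E * E) * (Y * X) = Y * (X * E * E * Y) * X := by
        simp [mul_assoc]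
      rw [this, rel3]
    rw [h2, one_mul, mul_one] at h1
    have h3 : ρ (Y * X * X) X := by
      have := ρ.mul hyx (ρ.refl X)
      rwa [one_mul] at this
    exact ρ.trans (ρ.symm h1) h3
  -- X ρ Y*Y
  have hXYY : ρ X (Y * Y) := ρ.trans (ρ.symm heeX) (ρ.mul heY heY)
  -- Y ρ Y*Y*Y  (from e³ = e and E ρ Y)
  have hY3 : ρ Y (Y * Y * Y) := by
    have h1 : ρ (E * E * E) (Y * Y * Y) := ρ.mul (ρ.mul heY heY) heY
    rw [rel1] at h1
    exact ρ.trans (ρ.symm heY) h1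
  -- Y*Y ρ 1
  have hYY1 : ρ (Y * Y) 1 := by
    have h1 : ρ (Y * X) (Y * Y * Y * X) := ρ.mul hY3 (ρ.refl X)
    have h2 : Y * Y * Y * X = Y * Y * (Y * X) := by simp [mul_assoc]
    rw [h2] at h1
    have h3 : ρ (Y * Y * (Y * X)) (Y * Y * 1) := ρ.mul (ρ.refl _) hyx
    rw [mul_one] at h3
    exact ρ.symm (ρ.trans (ρ.trans (ρ.symm hyx) h1) h3)
  -- X ρ 1
  have hX1 : ρ X 1 := ρ.trans hXYY hYY1
  -- Y ρ 1
  have hY1 : ρ Y 1 := by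
    have := ρ.mul hX1 (ρ.refl Y)
    rw [rel4, one_mul] at this
    exact ρ.symm this
  have hE1 : ρ E 1 := ρ.trans heY hY1
  -- every element is ρ-related to 1
  have hall : ∀ m : M, ρ m 1 := by
    intro m
    refine PresentedMonoid.inductionOn m ?_
    intro a
    induction a using FreeMonoid.inductionOn' with
      | one => exact ρ.refl 1
      | of_mul b l ih =>
        have hb : ρ (PresentedMonoid.of rel b) 1 := by
          cases b
          · exact hX1
          · exact hY1
          · exact hE1
        have : ρ (PresentedMonoid.of rel b * PresentedMonoid.mk rel l) (1 * 1) :=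
          ρ.mul hb ih
        rw [one_mul] at this
        exact this
  exact eq_top_iff.2 fun a b _ => ρ.trans (hall a) (ρ.symm (hall b))
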